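/- Let a, b ∈ ℝ³ be nonzero, non-parallel vectors with ‖a+b‖ + ‖a−b‖ = 2, and let G be the joint observable of E^{1,a} and E^{1,b} given by G(i,j) := ‖n_{ij}‖ · (1/2)(I + (n_{ij}/‖n_{ij}‖)·σ), where n_{ij} := (1/2)((−1)^{i+1} a + (−1)^{j+1} b). Then G(1,1) is not the greatest element of lb(A^{1,a}, A^{1,b}): there exists an effect C with C ≤ A^{1,a} and C ≤ A^{1,b} such that C ≤ G(1,1) fails. -/

import Mathlib

open Matrix
open scoped ComplexOrder

noncomputable section

/-- 2×2 complex matrices. -/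
abbrev Mat2 := Matrix (Fin 2) (Fin 2) ℂ

/-- The Pauli matrix σ₁. -/
def sigma1 : Mat2 := !![0, 1; 1, 0]
/-- The Pauli matrix σ₂. -/
def sigma2 : Mat2 := !![0, -Complex.I; Complex.I, 0]
/-- The Pauli matrix σ₃. -/
def sigma3 : Mat2 := !![1, 0; 0, -1]

/-- ℝ³ with the Euclidean norm. -/
abbrev E3 := EuclideanSpace ℝ (Fin 3)

/-- For `v ∈ ℝ³`, `v·σ = v₁σ₁ + v₂σ₂ + v₃σ₃`. -/
def dotSigma (v : E3) : Mat2 := (v 0 : ℂ) • sigma1 + (v 1 : ℂ) • sigma2 + (v 2 : ℂ) • sigma3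

/-- `A^{α,a} = (1/2)(α·I + a·σ)`. -/
def Amat (α : ℝ) (a : E3) : Mat2 := (2 : ℂ)⁻¹ • ((α : ℂ) • (1 : Mat2) + dotSigma a)

/-- An operator is an effect if `0 ≤ A ≤ I` in the Loewner order. -/
def IsEffect (A : Mat2) : Prop := A.PosSemidef ∧ (1 - A).PosSemidef

/-- The Loewner order: `A ≤ B` iff `B - A` is positive semidefinite. -/
def loewnerLE (A B : Mat2) : Prop := (B - A).PosSemidef

/-- The simple (two-outcome) qubit observable `E^{α,a}`,
with `E^{α,a}(1) = A^{α,a}` and `E^{α,a}(0) = I - A^{α,a}`. -/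
def Eobs (α : ℝ) (a : E3) : Fin 2 → Mat2 := fun i => if i = 1 then Amat α a else 1 - Amat α a

/-- `G` is a joint observable of the two-outcome observables `E` and `F`. -/
def IsJointObs (G : Fin 2 → Fin 2 → Mat2) (E F : Fin 2 → Mat2) : Prop :=
  (∀ i j, (G i j).PosSemidef) ∧ (∑ i, ∑ j, G i j) = 1 ∧
    (∀ i, (∑ j, G i j) = E i) ∧ (∀ j, (∑ i, G i j) = F j)

/-- Joint measurability of two two-outcome observables. -/
def JointlyMeasurable2 (E F : Fin 2 → Mat2) : Prop := ∃ G, IsJointObs G E F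

/-- `G` is a joint observable of the three two-outcome observables `E`, `F` and `K`. -/
def IsJointObs3 (G : Fin 2 → Fin 2 → Fin 2 → Mat2) (E F K : Fin 2 → Mat2) : Prop :=
  (∀ i j k, (G i j k).PosSemidef) ∧ (∑ i, ∑ j, ∑ k, G i j k) = 1 ∧
    (∀ i, (∑ j, ∑ k, G i j k) = E i) ∧ (∀ j, (∑ i, ∑ k, G i j k) = F j) ∧
    (∀ k, (∑ i, ∑ j, G i j k) = K k)

/-- Joint measurability of three two-outcome observables. -/
def JointlyMeasurable3 (E F K : Fin 2 → Mat2) : Prop := ∃ G, IsJointObs3 G E F K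

/-- `n_{ij} = (1/2)((-1)^{i+1} a + (-1)^{j+1} b)`. -/
def nvec (a b : E3) (i j : Fin 2) : E3 :=
  (2 : ℝ)⁻¹ • ((-1 : ℝ) ^ ((i : ℕ) + 1) • a + (-1 : ℝ) ^ ((j : ℕ) + 1) • b)

/-- `G(i,j) = ‖n_{ij}‖ (1/2)(I + (n_{ij}/‖n_{ij}‖)·σ)`. -/
def Gab (a b : E3) : Fin 2 → Fin 2 → Mat2 := fun i j =>
  (‖nvec a b i j‖ : ℂ) •
    ((2 : ℂ)⁻¹ • ((1 : Mat2) + dotSigma (‖nvec a b i j‖⁻¹ • nvec a b i j)))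

def mmat (γ : ℝ) (v : E3) : Mat2 := (2 : ℂ)⁻¹ • ((γ : ℂ) • (1 : Mat2) + dotSigma v)

lemma mmat_entries (γ : ℝ) (v : E3) :
    mmat γ v = !![(((γ : ℂ) + (v 2 : ℝ))/2), (((v 0 : ℝ) : ℂ) - (v 1 : ℝ)*Complex.I)/2;
      (((v 0 : ℝ) : ℂ) + (v 1 : ℝ)*Complex.I)/2, (((γ : ℂ) - (v 2 : ℝ))/2)] := by
  ext i j
  fin_cases i <;> fin_cases j <;>
    simp [mmat, dotSigma, sigma1, sigma2, sigma3, Matrix.one_apply] <;> ring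

lemma mmat_sub (γ δ : ℝ) (v w : E3) : mmat γ v - mmat δ w = mmat (γ - δ) (v - w) := by
  simp only [mmat_entries]
  ext i j
  fin_cases i <;> fin_cases j <;> simp [PiLp.sub_apply] <;> ring

lemma mmat_one : mmat 2 0 = 1 := by
  simp only [mmat_entries]
  ext i j
  fin_cases i <;> fin_cases j <;> simp [Matrix.one_apply]

lemma mmat_herm (γ : ℝ) (v : E3) : (mmat γ v).IsHermitian := by
  rw [Matrix.IsHermitian, mmat_entries]
  ext i j
  fin_cases i <;> fin_cases j <;>
    simp [Matrix.conjTranspose_apply, Complex.ext_iff]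

lemma cauchy3 (v1 v2 v3 m1 m2 m3 : ℝ) :
    (v1*m1 + v2*m2 + v3*m3)^2 ≤ (v1^2+v2^2+v3^2)*(m1^2+m2^2+m3^2) := by
  nlinarith [sq_nonneg (v1*m2 - v2*m1), sq_nonneg (v1*m3 - v3*m1), sq_nonneg (v2*m3 - v3*m2)]

lemma norm_sq_E3 (v : E3) : ‖v‖^2 = (v 0)^2 + (v 1)^2 + (v 2)^2 := by
  rw [EuclideanSpace.norm_eq]
  rw [Real.sq_sqrt (by positivity)]
  simp [Fin.sum_univ_three, sq]

set_option maxHeartbeats 1000000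

lemma quad3 (γ w1 w2 w3 m1 m2 m3 N : ℝ) (hN : 0 ≤ N) (hγ : 0 ≤ γ)
    (hw : w1^2+w2^2+w3^2 ≤ γ^2) (hm : m1^2+m2^2+m3^2 = N^2) :
    0 ≤ γ*N + (w1*m1+w2*m2+w3*m3) := by
  have hcs := cauchy3 w1 w2 w3 m1 m2 m3
  rw [hm] at hcs
  have hD2 : (w1*m1+w2*m2+w3*m3)^2 ≤ γ^2*N^2 := by
    calc (w1*m1+w2*m2+w3*m3)^2 ≤ (w1^2+w2^2+w3^2)*N^2 := hcs
    _ ≤ γ^2*N^2 := by nlinarith [sq_nonneg N]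
  nlinarith [sq_nonneg (γ*N + (w1*m1+w2*m2+w3*m3)), mul_nonneg hγ hN]

lemma mmat_posSemidef {γ : ℝ} {v : E3} (h : ‖v‖ ≤ γ) : (mmat γ v).PosSemidef := by
  refine Matrix.posSemidef_iff_dotProduct_mulVec.mpr ⟨mmat_herm γ v, fun x => ?_⟩
  have hv : (v 0)^2 + (v 1)^2 + (v 2)^2 ≤ γ^2 := by
    rw [← norm_sq_E3]; nlinarith [norm_nonneg v]
  have hγ : 0 ≤ γ := le_trans (norm_nonneg v) h
  rw [mmat_entries, Complex.le_def]
  constructor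
  · simp only [Complex.zero_re]
    simp [dotProduct, Matrix.mulVec, Fin.sum_univ_two, Complex.add_re, Complex.mul_re,
      Complex.mul_im, Complex.div_re, Complex.div_im]
    set p := (x 0).re; set q := (x 0).im; set r := (x 1).re; set s := (x 1).im
    have key := quad3 γ (v 0) (v 1) (v 2) (2*(p*r+q*s)) (2*(p*s-q*r)) (p^2+q^2-r^2-s^2)
      (p^2+q^2+r^2+s^2) (by positivity) hγ hv (by ring)
    nlinarith [key]
  · simp only [Complex.zero_im]
    simp [dotProduct, Matrix.mulVec, Fin.sum_univ_two, Complex.add_im, Complex.mul_re,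
      Complex.mul_im, Complex.div_re, Complex.div_im]
    ring

lemma mmat_not_posSemidef {γ : ℝ} {v : E3} (h : γ < ‖v‖) : ¬ (mmat γ v).PosSemidef := by
  intro hP
  obtain ⟨_, hpsd⟩ := Matrix.posSemidef_iff_dotProduct_mulVec.mp hP
  have hr : ‖v‖^2 = v 0^2 + v 1^2 + v 2^2 := norm_sq_E3 v
  have hr0 : (0:ℝ) ≤ ‖v‖ := norm_nonneg v
  by_cases hdeg : v 0^2 + v 1^2 + (v 2 + ‖v‖)^2 = 0
  · -- degenerate: v 0 = v 1 = 0, v 2 = -‖v‖; use x = (1,0)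
    have h3 : v 2 = -‖v‖ := by nlinarith [sq_nonneg (v 0), sq_nonneg (v 1), sq_nonneg (v 2+‖v‖)]
    have := hpsd ![1, 0]
    rw [mmat_entries, Complex.le_def] at this
    obtain ⟨hre, -⟩ := this
    simp [dotProduct, Matrix.mulVec, Fin.sum_univ_two, Complex.add_re, Complex.mul_re,
      Complex.div_re] at hre
    rw [h3] at hre
    linarith
  · have := hpsd ![(v 0 : ℂ) - (v 1 : ℂ)*Complex.I, -((v 2 : ℂ) + (‖v‖ : ℂ))]
    rw [mmat_entries, Complex.le_def] at this
    obtain ⟨hre, -⟩ := this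
    simp [dotProduct, Matrix.mulVec, Fin.sum_univ_two, Complex.add_re, Complex.mul_re,
      Complex.mul_im, Complex.div_re, Complex.div_im, Complex.sub_re, Complex.sub_im,
      Complex.neg_re, Complex.neg_im] at hre
    have hpos : 0 < v 0^2 + v 1^2 + (v 2+‖v‖)^2 :=
      lt_of_le_of_ne (by positivity) (Ne.symm hdeg)
    have hz : (‖v‖ + v 2) * (‖v‖^2 - (v 0^2 + v 1^2 + v 2^2)) = 0 := by rw [hr]; ring
    nlinarith [hre, hz, mul_pos (show (0:ℝ) < ‖v‖ - γ by linarith) hpos]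

lemma Amat_eq (α : ℝ) (a : E3) : Amat α a = mmat α a := rfl

lemma dotSigma_smul (r : ℝ) (v : E3) : dotSigma (r • v) = (r : ℂ) • dotSigma v := by
  simp only [dotSigma, PiLp.smul_apply, smul_eq_mul, Complex.ofReal_mul, smul_add, smul_smul]

lemma Gab_eq (a b : E3) (hn : nvec a b 1 1 ≠ 0) :
    Gab a b 1 1 = mmat ‖nvec a b 1 1‖ (nvec a b 1 1) := by
  have hnn : (‖nvec a b 1 1‖ : ℂ) ≠ 0 := by
    simpa using norm_ne_zero_iff.mpr hn
  simp only [Gab, mmat, dotSigma_smul, Complex.ofReal_inv]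
  rw [smul_comm ((‖nvec a b 1 1‖:ℂ)) ((2:ℂ)⁻¹)]
  congr 1
  rw [smul_add, smul_smul, mul_inv_cancel₀ hnn, one_smul]

lemma nvec_one_one (a b : E3) : nvec a b 1 1 = (2:ℝ)⁻¹ • (a + b) := by
  simp [nvec]


/-- on the boundary `‖a+b‖ + ‖a-b‖ = 2` (with `a`, `b` nonzero and
non-parallel), `G(1,1)` is not the greatest element of `lb(A^{1,a}, A^{1,b})`. -/
theorem not_greatest (a b : E3) (ha0 : a ≠ 0) (hb0 : b ≠ 0)
    (hpar : ¬ ∃ t : ℝ, a = t • b) (h : ‖a + b‖ + ‖a - b‖ = 2) :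
    ∃ C : Mat2, IsEffect C ∧ loewnerLE C (Amat 1 a) ∧ loewnerLE C (Amat 1 b) ∧
      ¬ loewnerLE C (Gab a b 1 1) := by
  -- a and b have norm < 1
  have hstrict : ∀ x y : E3, y ≠ 0 → (¬ ∃ t : ℝ, x = t • y) → ‖x + y‖ + ‖x - y‖ = 2 → ‖x‖ < 1 := by
    intro x y hy0 hp hxy
    have hle : 2 * ‖x‖ ≤ 2 := by
      calc 2 * ‖x‖ = ‖(x + y) + (x - y)‖ := by rw [show (x+y)+(x-y) = (2:ℝ)•x by module, norm_smul]; norm_num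
      _ ≤ ‖x + y‖ + ‖x - y‖ := norm_add_le _ _
      _ = 2 := hxy
    rcases lt_or_eq_of_le hle with h' | h'
    · linarith
    · exfalso
      have heq : ‖(x + y) + (x - y)‖ = ‖x + y‖ + ‖x - y‖ := by
        rw [show (x+y)+(x-y) = (2:ℝ)•x by module, norm_smul]
        simp only [Real.norm_ofNat]
        linarith
      have hsr : SameRay ℝ (x + y) (x - y) := sameRay_iff_norm_add.mpr heq
      rcases eq_or_ne (x + y) 0 with hxy0 | hxy0
      · exact hp ⟨-1, by have : x = -y := by linear_combination (norm := module) hxy0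
                         simpa using this⟩
      rcases eq_or_ne (x - y) 0 with hxy1 | hxy1
      · exact hp ⟨1, by have : x = y := by linear_combination (norm := module) hxy1
                        simpa using this⟩
      obtain ⟨r, s, hr, hs, hrs⟩ := hsr.exists_pos hxy0 hxy1
      rcases eq_or_ne r s with hrseq | hrsne
      · subst hrseq
        apply hy0
        have : (2*r) • y = 0 := by linear_combination (norm := module) hrs
        have h2r : (2*r) ≠ 0 := by positivity
        exact (smul_eq_zero.mp this).resolve_left h2r
      · refine hp ⟨(r-s)⁻¹ * (-(r+s)), ?_⟩
        have hrs0 : r - s ≠ 0 := sub_ne_zero.mpr hrsne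
        have hkey : (r - s) • x = (-(r+s)) • y := by linear_combination (norm := module) hrs
        calc x = (r-s)⁻¹ • ((r-s) • x) := by rw [smul_smul, inv_mul_cancel₀ hrs0, one_smul]
        _ = (r-s)⁻¹ • ((-(r+s)) • y) := by rw [hkey]
        _ = ((r-s)⁻¹ * (-(r+s))) • y := by rw [smul_smul]
  have ha1 : ‖a‖ < 1 := hstrict a b hb0 hpar h
  have hparba : ¬ ∃ t : ℝ, b = t • a := by
    rintro ⟨t, ht⟩
    have ht0 : t ≠ 0 := by rintro rfl; simp at ht; exact hb0 ht
    exact hpar ⟨t⁻¹, by rw [ht, smul_smul, inv_mul_cancel₀ ht0, one_smul]⟩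
  have hb1 : ‖b‖ < 1 := by
    refine hstrict b a ha0 hparba ?_
    rw [show b + a = a + b by abel, show b - a = -(a - b) by abel, norm_neg]; exact h
  set n := nvec a b 1 1 with hn
  have hab0 : a + b ≠ 0 := by
    intro hh
    exact hpar ⟨-1, by have : a = -b := by linear_combination (norm := module) hh
                       simpa using this⟩
  have hn0 : n ≠ 0 := by
    rw [hn, nvec_one_one]
    exact smul_ne_zero (by norm_num) hab0
  have hnnorm : (0:ℝ) < ‖n‖ := norm_pos_iff.mpr hn0
  set c := min ((1-‖a‖)/2) ((1-‖b‖)/2) with hc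
  have hc0 : 0 < c := by
    apply lt_min <;> linarith
  have hca : c ≤ (1-‖a‖)/2 := min_le_left _ _
  have hcb : c ≤ (1-‖b‖)/2 := min_le_right _ _
  have hc12 : c ≤ 1/2 := by
    have := norm_nonneg a; linarith
  set u := ‖n‖⁻¹ • n with hu
  have hu1 : ‖u‖ = 1 := by
    rw [hu, norm_smul, Real.norm_eq_abs, abs_of_pos (by positivity), inv_mul_cancel₀ (ne_of_gt hnnorm)]
  have hcu : ‖(-c) • u‖ = c := by
    rw [norm_smul, Real.norm_eq_abs, abs_neg, abs_of_pos hc0, hu1, mul_one]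
  refine ⟨mmat c ((-c) • u), ⟨?_, ?_⟩, ?_, ?_, ?_⟩
  · exact mmat_posSemidef (le_of_eq hcu)
  · rw [← mmat_one, mmat_sub]
    apply mmat_posSemidef
    rw [show (0 : E3) - (-c) • u = c • u by module, norm_smul, Real.norm_eq_abs,
      abs_of_pos hc0, hu1, mul_one]
    linarith
  · rw [loewnerLE, Amat_eq, mmat_sub]
    apply mmat_posSemidef
    rw [show a - (-c) • u = a + c • u by module]
    calc ‖a + c • u‖ ≤ ‖a‖ + ‖c • u‖ := norm_add_le _ _
    _ = ‖a‖ + c := by rw [norm_smul, Real.norm_eq_abs, abs_of_pos hc0, hu1, mul_one]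
    _ ≤ 1 - c := by linarith
  · rw [loewnerLE, Amat_eq, mmat_sub]
    apply mmat_posSemidef
    rw [show b - (-c) • u = b + c • u by module]
    calc ‖b + c • u‖ ≤ ‖b‖ + ‖c • u‖ := norm_add_le _ _
    _ = ‖b‖ + c := by rw [norm_smul, Real.norm_eq_abs, abs_of_pos hc0, hu1, mul_one]
    _ ≤ 1 - c := by linarith
  · rw [loewnerLE, Gab_eq a b hn0, mmat_sub]
    apply mmat_not_posSemidef
    have : n - (-c) • u = (1 + c * ‖n‖⁻¹) • n := by
      rw [hu]; module
    rw [this, norm_smul, Real.norm_eq_abs, abs_of_pos (by positivity)]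
    have : (1 + c * ‖n‖⁻¹) * ‖n‖ = ‖n‖ + c := by
      field_simp
    rw [this]
    linarith
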